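/- Fix p ∈ (0,1) and consider the AWGN reward r(x) = (1/2)·ln(1+x), for which κ̄_{1/(1−p)}(y) = max((1+y)(1−p) − 1, 0) and η(y) := Σ_{i=1}^∞ max((1+y)(1−p)^{i−1} − 1, 0). For every x ≥ 0, let M̃ be the least positive integer m satisfying (1 + p(x+m))·(1−p)^m < 1 (such m exists), and set w := p(x + M̃)/(1 − (1−p)^{M̃}) − 1. Then w ≥ 0 and η(w) = x; that is, the explicit formula w gives the inverse of η, and hence the maximin optimal policy ω_AWGN(x) for unit channel coefficient. -/

import Mathlib

open Set

/-- **Explicit maximin optimal policy for the AWGN reward** (Theorem 6, unit channel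
coefficient). Fix `p ∈ (0,1)` and the AWGN reward `r x = (1/2) ln (1+x)`, for which
`η(y) = ∑_{i=1}^∞ max ((1+y)(1-p)^{i-1} - 1) 0`. For every `x ≥ 0` there is a least
positive integer `M̃` with `(1 + p (x + M̃)) (1-p)^{M̃} < 1`, and
`w := p (x + M̃) / (1 - (1-p)^{M̃}) - 1` satisfies `w ≥ 0` and `η(w) = x`; that is, `w`
is the value `ω_AWGN(x)` of the maximin optimal policy. -/
theorem awgn_explicit_policy (p : ℝ) (hp : p ∈ Ioo (0 : ℝ) 1) (x : ℝ) (hx : 0 ≤ x) :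
    ∃ Mt : ℕ,
      IsLeast {m : ℕ | 1 ≤ m ∧ (1 + p * (x + (m : ℝ))) * (1 - p) ^ m < 1} Mt ∧
      0 ≤ p * (x + (Mt : ℝ)) / (1 - (1 - p) ^ Mt) - 1 ∧
      (∑' i : ℕ,
        max ((1 + (p * (x + (Mt : ℝ)) / (1 - (1 - p) ^ Mt) - 1)) * (1 - p) ^ i - 1) 0)
        = x := by
  obtain ⟨hp0, hp1⟩ := hp
  set q : ℝ := 1 - p with hq
  have hq0 : 0 < q := by simp [hq]; linarith
  have hq1 : q < 1 := by simp [hq]; linarith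
  have htend : Filter.Tendsto (fun m : ℕ => (1 + p * (x + (m : ℝ))) * q ^ m)
      Filter.atTop (nhds 0) := by
    have h1 := (tendsto_pow_atTop_nhds_zero_of_lt_one hq0.le hq1).const_mul (1 + p * x)
    have h2 := (tendsto_pow_const_mul_const_pow_of_lt_one 1 hq0.le hq1).const_mul p
    have := h1.add h2
    simp only [mul_zero, add_zero] at this
    convert this using 2 with m
    simp [pow_one]
    ring
  have hev : ∀ᶠ m : ℕ in Filter.atTop, (1 + p * (x + (m : ℝ))) * q ^ m < 1 :=
    htend.eventually (gt_mem_nhds one_pos)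
  obtain ⟨m, hm1, hmlt⟩ := ((Filter.eventually_ge_atTop 1).and hev).exists
  have hne : {m : ℕ | 1 ≤ m ∧ (1 + p * (x + (m : ℝ))) * (1 - p) ^ m < 1}.Nonempty :=
    ⟨m, hm1, hmlt⟩
  set S := {m : ℕ | 1 ≤ m ∧ (1 + p * (x + (m : ℝ))) * (1 - p) ^ m < 1} with hS
  set M := sInf S with hM
  obtain ⟨hM1, hMlt⟩ := Nat.sInf_mem hne
  have hqM1 : q ^ M < 1 := pow_lt_one₀ hq0.le hq1 (by omega)
  have hqMpos : 0 < 1 - q ^ M := by linarith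
  set w : ℝ := p * (x + (M : ℝ)) / (1 - q ^ M) - 1 with hw
  have hgs : 1 - q ^ M = p * ∑ i ∈ Finset.range M, q ^ i := by
    rw [geom_sum_eq (by linarith : q ≠ 1) M]
    rw [hq, mul_div_assoc', eq_div_iff (by linarith : (1 - p) - 1 ≠ 0)]
    ring
  have hsum_le : 1 - q ^ M ≤ p * (M : ℝ) := by
    rw [hgs]
    have : ∑ i ∈ Finset.range M, q ^ i ≤ (M : ℝ) := by
      calc ∑ i ∈ Finset.range M, q ^ i ≤ ∑ i ∈ Finset.range M, (1:ℝ) :=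
        Finset.sum_le_sum fun i _ => pow_le_one₀ hq0.le hq1.le
      _ = M := by simp
    nlinarith
  have hw0 : 0 ≤ w := by
    rw [hw, sub_nonneg, le_div_iff₀ hqMpos, one_mul]
    nlinarith
  have h1w : 1 + w = p * (x + (M : ℝ)) / (1 - q ^ M) := by rw [hw]; ring
  have hlow : (1 + w) * q ^ M < 1 := by
    rw [h1w, div_mul_eq_mul_div, div_lt_one hqMpos]
    nlinarith
  have hhigh : 1 ≤ (1 + w) * q ^ (M - 1) := by
    rcases eq_or_lt_of_le hM1 with h | h
    · have hM1' : M = 1 := h.symm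
      rw [hM1']
      simpa using by linarith
    · have hin : ¬ (M - 1 ∈ S) := by
        intro hcon; exact absurd (Nat.sInf_le hcon) (by omega)
      have hge : 1 ≤ (1 + p * (x + ((M - 1 : ℕ) : ℝ))) * (1 - p) ^ (M - 1) := by
        by_contra hcc
        exact hin ⟨by omega, by push_neg at hcc; linarith⟩
      have hcast : ((M - 1 : ℕ) : ℝ) = (M : ℝ) - 1 := by
        push_cast [Nat.cast_sub (show 1 ≤ M from hM1)]; ring
      rw [hcast] at hge
      rw [h1w, div_mul_eq_mul_div, le_div_iff₀ hqMpos]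
      have hqMeq : q ^ M = q ^ (M - 1) * q := by
        rw [← pow_succ]; congr 1; omega
      rw [hqMeq]
      have := pow_pos hq0 (M - 1)
      nlinarith
  have hgoal : (∑' i : ℕ, max ((1 + w) * q ^ i - 1) 0) = x := by
    have hzero : ∀ i ∉ Finset.range M, max ((1 + w) * q ^ i - 1) 0 = 0 := by
      intro i hi
      rw [Finset.mem_range, not_lt] at hi
      rw [max_eq_right]
      have : (1 + w) * q ^ i ≤ (1 + w) * q ^ M :=
        mul_le_mul_of_nonneg_left (pow_le_pow_of_le_one hq0.le hq1.le hi) (by linarith)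
      linarith
    rw [tsum_eq_sum hzero]
    have hpos : ∀ i ∈ Finset.range M, max ((1 + w) * q ^ i - 1) 0 = (1 + w) * q ^ i - 1 := by
      intro i hi
      rw [Finset.mem_range] at hi
      rw [max_eq_left]
      have : (1 + w) * q ^ (M - 1) ≤ (1 + w) * q ^ i :=
        mul_le_mul_of_nonneg_left
          (pow_le_pow_of_le_one hq0.le hq1.le (by omega)) (by linarith)
      linarith
    rw [Finset.sum_congr rfl hpos, Finset.sum_sub_distrib, ← Finset.mul_sum,
      geom_sum_eq (by linarith : q ≠ 1) M, h1w]
    simp only [Finset.sum_const, Finset.card_range, nsmul_eq_mul, mul_one]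
    have hgq : (q ^ M - 1) / (q - 1) = (1 - q ^ M) / p := by
      rw [hq]; ring_nf
    rw [hgq]
    field_simp
    ring
  exact ⟨M, ⟨⟨hM1, hMlt⟩, fun b hb => Nat.sInf_le hb⟩, hw0, hgoal⟩
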